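/- Let G and H be uniformly locally finite connected graphs that are quasi-isometric. If G has the polynomial retaining property of degree d, then H has the polynomial retaining property of degree d. -/
import Mathlib


/-- The growth comparison relation: `f ≼ g` iff there is `C > 0` with
`f n ≤ C * g (C*n + C) + C` for all `n`. -/
def GrowthLE (f g : ℕ → ℕ) : Prop :=
  ∃ C : ℕ, 0 < C ∧ ∀ n, f n ≤ C * g (C * n + C) + C

/-- Equivalence of growth rates. -/
def GrowthEquiv (f g : ℕ → ℕ) : Prop := GrowthLE f g ∧ GrowthLE g f

/-- The growth function of a subset `U` of a metric space, with basepoint set `A`: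
`n ↦ #(U ∩ B(A, n))`. -/
noncomputable def relGrowth {X : Type*} [MetricSpace X] (U A : Set X) : ℕ → ℕ :=
  fun n => Set.ncard {x | x ∈ U ∧ ∃ a ∈ A, dist a x ≤ (n : ℝ)}

/-- A metric space is discrete and proper iff all balls (of integer radius) are finite. -/
def DiscreteProper (X : Type*) [MetricSpace X] : Prop :=
  ∀ (x : X) (n : ℕ), {y : X | dist x y ≤ (n : ℝ)}.Finite

/-- Uniformly proper: there is a uniform bound on cardinalities of all balls of radius `n`. -/
def UniformlyProper (X : Type*) [MetricSpace X] : Prop :=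
  ∃ g : ℕ → ℕ, ∀ (x : X) (n : ℕ),
    {y : X | dist x y ≤ (n : ℝ)}.Finite ∧ Set.ncard {y : X | dist x y ≤ (n : ℝ)} ≤ g n

/-- A `c`-quasi-isometry between metric spaces. -/
def IsQuasiIsometryMS {X Y : Type*} [MetricSpace X] [MetricSpace Y] (c : ℝ) (φ : X → Y) : Prop :=
  1 ≤ c ∧
  (∀ a b : X, dist a b / c - c ≤ dist (φ a) (φ b) ∧ dist (φ a) (φ b) ≤ c * dist a b + c) ∧
  (∀ y : Y, ∃ x : X, dist (φ x) y ≤ c)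

/-- Growth function of `U ⊆ V(G)` (with the metric induced by the path-metric of `G`)
with respect to basepoint set `A`. -/
noncomputable def graphGrowth {V : Type*} (G : SimpleGraph V) (U A : Set V) : ℕ → ℕ :=
  fun n => Set.ncard {v | v ∈ U ∧ ∃ a ∈ A, G.dist a v ≤ n}

/-- `Growth(U) = Growth(G)` for `U` a set of vertices of `G` with the induced metric. -/
def GrowthEqFull {V : Type*} (G : SimpleGraph V) (U : Set V) : Prop :=
  ∃ u₀ ∈ U, GrowthEquiv (graphGrowth G Set.univ {u₀}) (graphGrowth G U {u₀})

/-- The set of vertices protected up to (and including) time `n`. -/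
def protectedUpTo {V : Type*} (W : ℕ → Set V) (n : ℕ) : Set V :=
  ⋃ i ∈ Finset.Icc 1 n, W i

/-- The set of vertices on fire at time `n`, for fire reach `r`, strategy `W` and
initial fire `X0`: `X (n+1)` consists of vertices joined to `X n` by a path of length
at most `r` avoiding `(W 1 ∪ ⋯ ∪ W (n+1)) \ X n`. -/
def fireSet {V : Type*} (G : SimpleGraph V) (r : ℕ) (W : ℕ → Set V) (X0 : Set V) : ℕ → Set V
  | 0 => X0
  | n + 1 =>
    {v | ∃ u ∈ fireSet G r W X0 n, ∃ p : G.Walk u v, p.length ≤ r ∧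
      ∀ x ∈ p.support, x ∉ protectedUpTo W (n + 1) \ fireSet G r W X0 n}

/-- The set of vertices on fire at the end of the game. -/
def burnedSet {V : Type*} (G : SimpleGraph V) (r : ℕ) (W : ℕ → Set V) (X0 : Set V) : Set V :=
  ⋃ n, fireSet G r W X0 n

/-- An `{f n}`-strategy: at each time `n ≥ 1` at most `f n` vertices are protected. -/
def IsStrategyBound {V : Type*} (f : ℕ → ℕ) (W : ℕ → Set V) : Prop :=
  ∀ n, 1 ≤ n → (W n).Finite ∧ (W n).ncard ≤ f n

/-- A finite-step strategy protects no vertices after some finite time. -/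
def FiniteStepStrategy {V : Type*} (W : ℕ → Set V) : Prop :=
  ∃ N, ∀ n, N ≤ n → W n = ∅

/-- A retaining `({f n}, r)`-strategy for the initial fire `X0`. -/
def IsRetainingStrategy {V : Type*} (G : SimpleGraph V) (f : ℕ → ℕ) (r : ℕ)
    (X0 : Set V) (W : ℕ → Set V) : Prop :=
  IsStrategyBound f W ∧ GrowthEqFull G (burnedSet G r W X0)ᶜ

/-- The `({f n}, r)`-retaining property. -/
def RetainingProperty {V : Type*} (G : SimpleGraph V) (f : ℕ → ℕ) (r : ℕ) : Prop :=
  ∀ X0 : Set V, X0.Finite → ∃ W, IsRetainingStrategy G f r X0 W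

/-- Polynomial retaining property of degree `d` (fire reach one). -/
def PolyRetaining {V : Type*} (G : SimpleGraph V) (d : ℕ) : Prop :=
  ∃ K : ℕ, 0 < K ∧ RetainingProperty G (fun n => K * n ^ d) 1

/-- The finite-step `{f n}`-retaining property (fire reach one). -/
def FiniteStepRetainingProperty {V : Type*} (G : SimpleGraph V) (f : ℕ → ℕ) : Prop :=
  ∀ X0 : Set V, X0.Finite → ∃ W, IsRetainingStrategy G f 1 X0 W ∧ FiniteStepStrategy W

/-- The finite-step polynomial retaining property of degree `d`. -/
def FiniteStepPolyRetaining {V : Type*} (G : SimpleGraph V) (d : ℕ) : Prop :=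
  ∃ K : ℕ, 0 < K ∧ FiniteStepRetainingProperty G (fun n => K * n ^ d)

/-- The `({f n}, r)`-containment property. -/
def ContainmentProperty {V : Type*} (G : SimpleGraph V) (f : ℕ → ℕ) (r : ℕ) : Prop :=
  ∀ X0 : Set V, X0.Finite →
    ∃ W, IsStrategyBound f W ∧ (burnedSet G r W X0).Finite

/-- Polynomial containment property of degree `d` (fire reach one). -/
def PolyContainment {V : Type*} (G : SimpleGraph V) (d : ℕ) : Prop :=
  ∃ K : ℕ, 0 < K ∧ ContainmentProperty G (fun n => K * n ^ d) 1

/-- The constant containment property. -/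
def ConstantContainment {V : Type*} (G : SimpleGraph V) : Prop := PolyContainment G 0

/-- `D` is (the vertex set of) a connected component of `G \ K`. -/
def ComponentAvoiding {V : Type*} (G : SimpleGraph V) (K D : Set V) : Prop :=
  D.Nonempty ∧ D ⊆ Kᶜ ∧
  (∀ u ∈ D, ∀ v ∈ D, ∃ p : G.Walk u v, ∀ x ∈ p.support, x ∉ K) ∧
  (∀ u ∈ D, ∀ v : V, v ∉ K → (∃ p : G.Walk u v, ∀ x ∈ p.support, x ∉ K) → v ∈ D)

/-- A deep component of `G \ K`: not contained in any bounded neighborhood of `K`. -/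
def IsDeepComponent {V : Type*} (G : SimpleGraph V) (K D : Set V) : Prop :=
  ComponentAvoiding G K D ∧ ∀ r : ℕ, ¬ D ⊆ {v | ∃ k ∈ K, G.dist k v ≤ r}

/-- An unbounded component of `G \ K`. -/
def IsUnboundedComponent {V : Type*} (G : SimpleGraph V) (K D : Set V) : Prop :=
  ComponentAvoiding G K D ∧ ∀ (v : V) (r : ℕ), ¬ D ⊆ {u | G.dist v u ≤ r}

/-- Uniformly locally finite graph: vertex degrees are bounded. -/
def UnifLocFinite {V : Type*} (G : SimpleGraph V) : Prop :=
  ∃ M : ℕ, ∀ v : V, (G.neighborSet v).Finite ∧ (G.neighborSet v).ncard ≤ M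

/-- Locally finite graph. -/
def LocFinite {V : Type*} (G : SimpleGraph V) : Prop := ∀ v : V, (G.neighborSet v).Finite

/-- A `c`-quasi-isometry between two connected graphs (with their path-metrics). -/
def GraphQI {V V' : Type*} (c : ℝ) (G : SimpleGraph V) (H : SimpleGraph V') (φ : V → V') : Prop :=
  1 ≤ c ∧
  (∀ a b : V, (G.dist a b : ℝ) / c - c ≤ (H.dist (φ a) (φ b) : ℝ) ∧
    (H.dist (φ a) (φ b) : ℝ) ≤ c * (G.dist a b : ℝ) + c) ∧
  (∀ y : V', ∃ x : V, (H.dist (φ x) y : ℝ) ≤ c)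

/-- The Cayley graph of a group with respect to a set `S`. -/
def cayley (G : Type) [Group G] (S : Set G) : SimpleGraph G :=
  SimpleGraph.fromRel (fun a b => a⁻¹ * b ∈ S)

/-- `S` is a finite generating set. -/
def IsFiniteGenSet {G : Type} [Group G] (S : Set G) : Prop :=
  S.Finite ∧ Subgroup.closure S = ⊤

/-- The ball of radius `n` around the identity for the word metric w.r.t. `T`. -/
def wordBall {G : Type} [Group G] (T : Set G) (n : ℕ) : Set G :=
  {g | ∃ l : List G, (∀ x ∈ l, x ∈ T ∨ x⁻¹ ∈ T) ∧ l.length ≤ n ∧ l.prod = g}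

/-- The word metric w.r.t. `T`. -/
noncomputable def wordDist {G : Type} [Group G] (T : Set G) (x y : G) : ℕ :=
  sInf {n | x⁻¹ * y ∈ wordBall T n}

/-- `G` is an amalgamated product `A ∗_C B` with `C` a proper subgroup of both factors,
where `C` corresponds to the given subgroup. -/
def SplitsOverAmalgam (G : Type) [Group G] (C : Subgroup G) : Prop :=
  ∃ (Gi : Bool → Type) (_ : ∀ i, Group (Gi i)) (K : Type) (_ : Group K)
    (φ : ∀ i, K →* Gi i),
    (∀ i, Function.Injective (φ i)) ∧ (∀ i, ¬ Function.Surjective (φ i)) ∧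
    ∃ e : G ≃* Monoid.PushoutI φ,
      C = Subgroup.comap e.toMonoidHom (Monoid.PushoutI.base φ).range

/-- `G` is an HNN-extension over the given subgroup `C`. -/
def SplitsOverHNN (G : Type) [Group G] (C : Subgroup G) : Prop :=
  ∃ (H : Type) (_ : Group H) (A B : Subgroup H) (φ : A ≃* B)
    (e : G ≃* HNNExtension H A B φ),
    C = Subgroup.comap e.toMonoidHom
      (Subgroup.map (HNNExtension.of : H →* HNNExtension H A B φ) A)

/-- `G` splits over `C`: amalgamated product with `C` proper in both factors,
or HNN-extension over `C`. -/
def SplitsOver (G : Type) [Group G] (C : Subgroup G) : Prop :=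
  SplitsOverAmalgam G C ∨ SplitsOverHNN G C

/-- Amenability of a (discrete) group: existence of a left-invariant, finitely
additive probability measure defined on all subsets. -/
def IsAmenable (G : Type) [Group G] : Prop :=
  ∃ m : Set G → ℝ, (∀ A : Set G, 0 ≤ m A) ∧ m Set.univ = 1 ∧
    (∀ A B : Set G, Disjoint A B → m (A ∪ B) = m A + m B) ∧
    (∀ (g : G) (A : Set G), m ((g * ·) '' A) = m A)



/-! ### Auxiliary lemmas -/

lemma aux_mem_protectedUpTo_iff {V : Type*} (W : ℕ → Set V) (n : ℕ) (x : V) :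
    x ∈ protectedUpTo W n ↔ ∃ k, 1 ≤ k ∧ k ≤ n ∧ x ∈ W k := by
  simp only [protectedUpTo, Set.mem_iUnion, Finset.mem_Icc, exists_prop]
  constructor
  · rintro ⟨k, ⟨h1, h2⟩, h3⟩; exact ⟨k, h1, h2, h3⟩
  · rintro ⟨k, h1, h2, h3⟩; exact ⟨k, ⟨h1, h2⟩, h3⟩

lemma aux_fireSet_succ {V : Type*} (G : SimpleGraph V) (r : ℕ) (W : ℕ → Set V) (X0 : Set V)
    (n : ℕ) : fireSet G r W X0 n ⊆ fireSet G r W X0 (n+1) := by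
  intro v hv
  show v ∈ {v | ∃ u ∈ fireSet G r W X0 n, ∃ p : G.Walk u v, p.length ≤ r ∧
      ∀ x ∈ p.support, x ∉ protectedUpTo W (n + 1) \ fireSet G r W X0 n}
  refine ⟨v, hv, SimpleGraph.Walk.nil, by simp, ?_⟩
  intro x hx
  simp only [SimpleGraph.Walk.support_nil, List.mem_singleton] at hx
  subst hx
  exact fun hc => hc.2 hv

lemma aux_fireSet_mono {V : Type*} (G : SimpleGraph V) (r : ℕ) (W : ℕ → Set V) (X0 : Set V)
    {m n : ℕ} (h : m ≤ n) : fireSet G r W X0 m ⊆ fireSet G r W X0 n := by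
  induction n with
  | zero => rw [Nat.le_zero.mp h]
  | succ n ih =>
      rcases Nat.eq_or_lt_of_le h with h' | h'
      · subst h'; exact Set.Subset.rfl
      · exact (ih (Nat.lt_succ_iff.mp h')).trans (aux_fireSet_succ G r W X0 n)

lemma aux_fireSet_spread {V : Type*} (G : SimpleGraph V) (W : ℕ → Set V) (X0 : Set V) (T : ℕ)
    {u v : V} (p : G.Walk u v) :
    ∀ (t : ℕ), u ∈ fireSet G 1 W X0 t → t + p.length ≤ T →
    (∀ x ∈ p.support, ∀ k, 1 ≤ k → k ≤ T → x ∉ W k) → v ∈ fireSet G 1 W X0 (t + p.length) := by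
  induction p with
  | nil => intro t h _ _; simpa using h
  | @cons a b c h q ih =>
      intro t ha hT hsup
      have hb : b ∈ fireSet G 1 W X0 (t+1) := by
        show b ∈ {v | ∃ u ∈ fireSet G 1 W X0 t, ∃ p : G.Walk u v, p.length ≤ 1 ∧
            ∀ x ∈ p.support, x ∉ protectedUpTo W (t + 1) \ fireSet G 1 W X0 t}
        refine ⟨a, ha, SimpleGraph.Walk.cons h SimpleGraph.Walk.nil, by simp, ?_⟩
        intro x hx
        simp only [SimpleGraph.Walk.support_cons, SimpleGraph.Walk.support_nil,
          List.mem_cons, List.mem_singleton] at hx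
        rcases hx with hx | hx | hx
        · subst hx; exact fun hc => hc.2 ha
        · subst hx
          intro hc
          rcases (aux_mem_protectedUpTo_iff W (t+1) x).mp hc.1 with ⟨k, hk1, hk2, hk3⟩
          have hle : k ≤ T := by
            have : t + (q.length + 1) ≤ T := by simpa using hT
            omega
          exact hsup x (by simp [SimpleGraph.Walk.support_cons]) k hk1 hle hk3
        · exact absurd hx (by simp)
      have hT' : (t+1) + q.length ≤ T := by
        have : t + (q.length + 1) ≤ T := by simpa using hT
        omega
      have hres := ih (t+1) hb hT'
        (fun x hx => hsup x (by simp [SimpleGraph.Walk.support_cons, hx]))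
      have e : t + 1 + q.length = t + (SimpleGraph.Walk.cons h q).length := by
        simp [SimpleGraph.Walk.length_cons]; omega
      rwa [e] at hres

lemma aux_ncard_biUnion_le {α ι : Type*} (s : Finset ι) (f : ι → Set α) :
    (⋃ i ∈ s, f i).ncard ≤ ∑ i ∈ s, (f i).ncard := by
  classical
  induction s using Finset.induction_on with
  | empty => simp
  | @insert a s ha ih =>
      rw [Finset.set_biUnion_insert, Finset.sum_insert ha]
      exact (Set.ncard_union_le _ _).trans (Nat.add_le_add_left ih _)

lemma aux_block_exists {L k n : ℕ} (hL : 1 ≤ L) (hk1 : 1 ≤ k) (hkn : k ≤ L * n) :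
    ∃ m, 1 ≤ m ∧ m ≤ n ∧ L * (m - 1) + 1 ≤ k ∧ k ≤ L * m := by
  have hdm := Nat.div_add_mod (k-1) L
  have hmod : (k-1) % L < L := Nat.mod_lt _ hL
  have hmul : L * ((k-1)/L) ≤ k - 1 := Nat.mul_div_le _ _
  refine ⟨(k - 1) / L + 1, Nat.le_add_left _ _, ?_, ?_, ?_⟩
  · have h2 : L * ((k-1)/L) < L * n :=
      lt_of_le_of_lt hmul (lt_of_lt_of_le (Nat.sub_lt hk1 Nat.one_pos) hkn)
    exact Nat.succ_le_of_lt (Nat.lt_of_mul_lt_mul_left h2)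
  · rw [Nat.add_sub_cancel]; omega
  · rw [Nat.mul_add, Nat.mul_one]; omega

def auxReachSet {V : Type*} (G : SimpleGraph V) (x : V) : ℕ → Set V
  | 0 => {x}
  | n + 1 => auxReachSet G x n ∪ ⋃ v ∈ auxReachSet G x n, G.neighborSet v

lemma aux_reachSet_finite_card {V : Type*} (G : SimpleGraph V) {M : ℕ}
    (hM : ∀ v : V, (G.neighborSet v).Finite ∧ (G.neighborSet v).ncard ≤ M) (x : V) :
    ∀ n, (auxReachSet G x n).Finite ∧ (auxReachSet G x n).ncard ≤ (M+1)^n := by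
  intro n
  induction n with
  | zero => simp [auxReachSet]
  | succ n ih =>
      obtain ⟨hfin, hcard⟩ := ih
      have hUfin : (⋃ v ∈ auxReachSet G x n, G.neighborSet v).Finite :=
        Set.Finite.biUnion hfin (fun v _ => (hM v).1)
      have hfin' : (auxReachSet G x (n+1)).Finite := by
        rw [auxReachSet]; exact hfin.union hUfin
      refine ⟨hfin', ?_⟩
      have hU : (⋃ v ∈ auxReachSet G x n, G.neighborSet v)
          = ⋃ v ∈ hfin.toFinset, G.neighborSet v := by
        ext y; simp
      have hUcard : (⋃ v ∈ auxReachSet G x n, G.neighborSet v).ncard ≤ (M+1)^n * M := by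
        rw [hU]
        refine (aux_ncard_biUnion_le hfin.toFinset _).trans ?_
        refine (Finset.sum_le_card_nsmul _ _ M (fun v _ => (hM v).2)).trans ?_
        simp only [smul_eq_mul]
        have h2 : hfin.toFinset.card = (auxReachSet G x n).ncard :=
          (Set.ncard_eq_toFinset_card _ hfin).symm
        rw [h2]
        exact Nat.mul_le_mul_right _ hcard
      calc (auxReachSet G x (n+1)).ncard
          ≤ (auxReachSet G x n).ncard + (⋃ v ∈ auxReachSet G x n, G.neighborSet v).ncard := by
            rw [auxReachSet]; exact Set.ncard_union_le _ _
        _ ≤ (M+1)^n + (M+1)^n * M := Nat.add_le_add hcard hUcard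
        _ = (M+1)^(n+1) := by ring

lemma aux_self_mem_reachSet {V : Type*} (G : SimpleGraph V) (x : V) (n : ℕ) :
    x ∈ auxReachSet G x n := by
  induction n with
  | zero => simp [auxReachSet]
  | succ n ih => rw [auxReachSet]; exact Or.inl ih

lemma aux_walk_mem_reachSet {V : Type*} (G : SimpleGraph V) (x : V) :
    ∀ (n : ℕ) (y : V) (p : G.Walk x y), p.length ≤ n → y ∈ auxReachSet G x n := by
  intro n
  induction n with
  | zero =>
      intro y p hp
      have h0 := SimpleGraph.Walk.eq_of_length_eq_zero (Nat.le_zero.mp hp)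
      subst h0
      simp [auxReachSet]
  | succ n ih =>
      intro y p hp
      cases hrev : p.reverse with
      | nil => exact aux_self_mem_reachSet G x (n+1)
      | @cons _ z _ h q =>
          have hlen : q.length + 1 = p.length := by
            have := congrArg SimpleGraph.Walk.length hrev
            simpa [SimpleGraph.Walk.length_reverse, SimpleGraph.Walk.length_cons] using this.symm
          have hz : z ∈ auxReachSet G x n := ih z q.reverse (by
            rw [SimpleGraph.Walk.length_reverse]; omega)
          rw [auxReachSet]
          right
          exact Set.mem_biUnion hz (by exact h.symm)

lemma aux_ball_finite_bound {V : Type*} (G : SimpleGraph V) (hGu : UnifLocFinite G)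
    (hG : G.Connected) :
    ∃ b : ℕ → ℕ, ∀ (x : V) (n : ℕ),
      ({y | G.dist x y ≤ n} : Set V).Finite ∧ ({y | G.dist x y ≤ n} : Set V).ncard ≤ b n := by
  obtain ⟨M, hM⟩ := hGu
  refine ⟨fun n => (M+1)^n, fun x n => ?_⟩
  have hsub : ({y | G.dist x y ≤ n} : Set V) ⊆ auxReachSet G x n := by
    intro y hy
    obtain ⟨p, hp⟩ := hG.exists_walk_length_eq_dist x y
    exact aux_walk_mem_reachSet G x n y p (by rw [hp]; exact hy)
  obtain ⟨hfin, hcard⟩ := aux_reachSet_finite_card G hM x n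
  exact ⟨hfin.subset hsub, (Set.ncard_le_ncard hsub hfin).trans hcard⟩

lemma GrowthLE.aux_trans_mono {f g h : ℕ → ℕ} (h1 : GrowthLE f g) (h2 : GrowthLE g h)
    (hm : Monotone h) : GrowthLE f h := by
  obtain ⟨C₁, hC₁, hfg⟩ := h1
  obtain ⟨C₂, hC₂, hgh⟩ := h2
  refine ⟨C₁ * C₂ + C₁ + C₂, by positivity, fun n => ?_⟩
  set D := C₁ * C₂ + C₁ + C₂ with hD
  have hD1 : C₂ * C₁ ≤ D := by rw [hD]; nlinarith
  have hD2 : C₂ * C₁ + C₂ ≤ D := by rw [hD]; nlinarith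
  have hD3 : C₁ * C₂ + C₁ ≤ D := by rw [hD]; nlinarith
  have harg : C₂ * (C₁ * n + C₁) + C₂ ≤ D * n + D := by
    have e : C₂ * (C₁ * n + C₁) + C₂ = C₂ * C₁ * n + (C₂ * C₁ + C₂) := by ring
    rw [e]
    exact Nat.add_le_add (Nat.mul_le_mul_right n hD1) hD2
  calc f n ≤ C₁ * g (C₁ * n + C₁) + C₁ := hfg n
    _ ≤ C₁ * (C₂ * h (C₂ * (C₁ * n + C₁) + C₂) + C₂) + C₁ :=
        Nat.add_le_add_right (Nat.mul_le_mul_left _ (hgh _)) _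
    _ ≤ C₁ * (C₂ * h (D * n + D) + C₂) + C₁ :=
        Nat.add_le_add_right (Nat.mul_le_mul_left _ (Nat.add_le_add_right
          (Nat.mul_le_mul_left _ (hm harg)) _)) _
    _ = C₁ * C₂ * h (D * n + D) + (C₁ * C₂ + C₁) := by ring
    _ ≤ D * h (D * n + D) + D :=
        Nat.add_le_add (Nat.mul_le_mul_right _ (by rw [hD]; nlinarith)) hD3

lemma aux_ncard_le_mul_of_maps {α β : Type*} (f : α → β) (S : Set α) (T : Set β)
    (hT : T.Finite) (hmap : ∀ a ∈ S, f a ∈ T) (m : ℕ)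
    (hfib : ∀ b, ({a | a ∈ S ∧ f a = b} : Set α).ncard ≤ m) :
    S.ncard ≤ m * T.ncard := by
  classical
  have hS : S = ⋃ b ∈ hT.toFinset, {a | a ∈ S ∧ f a = b} := by
    ext a
    simp only [Set.mem_iUnion, Set.mem_setOf_eq, Set.Finite.mem_toFinset, exists_prop]
    constructor
    · intro ha; exact ⟨f a, hmap a ha, ha, rfl⟩
    · rintro ⟨b, _, ha, _⟩; exact ha
  calc S.ncard = (⋃ b ∈ hT.toFinset, {a | a ∈ S ∧ f a = b}).ncard := by rw [← hS]
    _ ≤ ∑ b ∈ hT.toFinset, ({a | a ∈ S ∧ f a = b} : Set α).ncard := aux_ncard_biUnion_le _ _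
    _ ≤ hT.toFinset.card * m := by
        refine (Finset.sum_le_card_nsmul _ _ m (fun b _ => hfib b)).trans ?_
        simp [smul_eq_mul]
    _ = m * T.ncard := by rw [Set.ncard_eq_toFinset_card _ hT]; ring

lemma aux_graphGrowth_singleton {V : Type*} (G : SimpleGraph V) (U : Set V) (u₀ : V) (n : ℕ) :
    graphGrowth G U {u₀} n = ({v | v ∈ U ∧ G.dist u₀ v ≤ n} : Set V).ncard := by
  unfold graphGrowth
  congr 1
  ext v
  simp

lemma aux_graphGrowth_univ {V : Type*} (G : SimpleGraph V) (u₀ : V) (n : ℕ) :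
    graphGrowth G Set.univ {u₀} n = ({v | G.dist u₀ v ≤ n} : Set V).ncard := by
  rw [aux_graphGrowth_singleton]
  congr 1
  ext v
  simp

lemma aux_graphGrowth_mono {V : Type*} (G : SimpleGraph V) (U : Set V) (u₀ : V)
    (hb : ∀ n : ℕ, ({y | G.dist u₀ y ≤ n} : Set V).Finite) :
    Monotone (graphGrowth G U {u₀}) := by
  intro m n hmn
  rw [aux_graphGrowth_singleton, aux_graphGrowth_singleton]
  exact Set.ncard_le_ncard (fun v hv => ⟨hv.1, hv.2.trans hmn⟩)
    ((hb n).subset (fun v hv => hv.2))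

theorem stmt16 {V V' : Type*} (G : SimpleGraph V) (H : SimpleGraph V')
    (hG : G.Connected) (hH : H.Connected)
    (hGu : UnifLocFinite G) (hHu : UnifLocFinite H)
    (hqi : ∃ (c : ℝ) (φ : V → V'), GraphQI c G H φ)
    (d : ℕ) (h : PolyRetaining G d) : PolyRetaining H d := by
  classical
  obtain ⟨c, φ, hc1, hdist, hdense⟩ := hqi
  obtain ⟨bG, hbG⟩ := aux_ball_finite_bound G hGu hG
  obtain ⟨bH, hbH⟩ := aux_ball_finite_bound H hHu hH
  obtain ⟨K, hK, hret⟩ := h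
  choose ψ hψR using hdense
  set C := ⌈c⌉₊ + 1 with hCdef
  have hC1 : 1 ≤ C := by omega
  have hcC : c ≤ (C : ℝ) := by
    refine le_trans (Nat.le_ceil c) ?_
    exact_mod_cast Nat.le_succ _
  have hc0 : (0:ℝ) < c := lt_of_lt_of_le one_pos hc1
  have hψC : ∀ y, H.dist (φ (ψ y)) y ≤ C := by
    intro y
    have h2 : (H.dist (φ (ψ y)) y : ℝ) ≤ (C:ℝ) := le_trans (hψR y) hcC
    exact_mod_cast h2
  have hup : ∀ a b : V, H.dist (φ a) (φ b) ≤ C * G.dist a b + C := by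
    intro a b
    have h2 := (hdist a b).2
    have hg0 : (0:ℝ) ≤ (G.dist a b : ℝ) := Nat.cast_nonneg _
    have h3 : (H.dist (φ a) (φ b) : ℝ) ≤ (C:ℝ) * (G.dist a b : ℝ) + (C:ℝ) := by
      nlinarith [mul_le_mul_of_nonneg_right hcC hg0]
    exact_mod_cast h3
  have hdown : ∀ a b : V, G.dist a b ≤ C * H.dist (φ a) (φ b) + C^2 := by
    intro a b
    have h1 := (hdist a b).1
    have hh0 : (0:ℝ) ≤ (H.dist (φ a) (φ b) : ℝ) := Nat.cast_nonneg _
    have h3 : (G.dist a b : ℝ) ≤ ((H.dist (φ a) (φ b) : ℝ) + c) * c := by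
      rw [← div_le_iff₀ hc0]
      linarith
    have hCC : c * c ≤ (C:ℝ) * (C:ℝ) :=
      mul_le_mul hcC hcC (le_of_lt hc0) (Nat.cast_nonneg _)
    have h4 : (G.dist a b : ℝ) ≤ (C:ℝ) * (H.dist (φ a) (φ b) : ℝ) + (C:ℝ)^2 := by
      nlinarith [mul_le_mul_of_nonneg_right hcC hh0]
    exact_mod_cast h4
  set P := 2 * C^2 with hPdef
  set J := C + 3 * C^2 with hJdef
  set L := J + P with hLdef
  have hL1 : 1 ≤ L := by
    rw [hLdef, hJdef, hPdef]; omega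
  set RH := C * L + 2 * C with hRHdef
  set K' := K * L^(d+1) * bH RH + 1 with hK'def
  refine ⟨K', Nat.succ_pos _, ?_⟩
  intro Y0 hY0
  set X0 : Set V := ⋃ y ∈ Y0, {x | G.dist (ψ y) x ≤ P} with hX0def
  have hX0fin : X0.Finite := Set.Finite.biUnion hY0 (fun y _ => (hbG (ψ y) P).1)
  obtain ⟨W, hWb, hWr⟩ := hret X0 hX0fin
  set W' : ℕ → Set V' :=
    fun n => {y | ∃ k, L*(n-1)+1 ≤ k ∧ k ≤ L*n ∧ ∃ w ∈ W k, H.dist y (φ w) ≤ RH} with hW'def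
  -- non-protection transfer
  have hprot : ∀ (n : ℕ) (y : V'), y ∉ protectedUpTo W' n →
      ∀ k, 1 ≤ k → k ≤ L * n → ∀ w ∈ W k, ¬ H.dist y (φ w) ≤ RH := by
    intro n y hy k hk1 hk2 w hw hdle
    obtain ⟨m, hm1, hm2, hm3, hm4⟩ := aux_block_exists hL1 hk1 hk2
    exact hy ((aux_mem_protectedUpTo_iff W' n y).mpr ⟨m, hm1, hm2, ⟨k, hm3, hm4, w, hw, hdle⟩⟩)
  -- main simulation induction
  have main : ∀ n, ∀ y ∈ fireSet H 1 W' Y0 n, ∀ z : V, G.dist (ψ y) z ≤ P →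
      z ∈ fireSet G 1 W X0 (L * n) := by
    intro n
    induction n with
    | zero =>
        intro y hy z hz
        have hy0 : y ∈ Y0 := hy
        exact Set.mem_biUnion hy0 hz
    | succ n ih =>
        intro y hy z hz
        obtain ⟨u, hu, p, hplen, hpavoid⟩ := hy
        have hyc := hpavoid y (SimpleGraph.Walk.end_mem_support p)
        by_cases hfire : y ∈ fireSet H 1 W' Y0 n
        · exact aux_fireSet_mono G 1 W X0 (Nat.mul_le_mul_left L (Nat.le_succ n))
            (ih y hfire z hz)
        · have hyprot : y ∉ protectedUpTo W' (n+1) := fun hmem => hyc ⟨hmem, hfire⟩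
          have hd1 : H.dist u y ≤ 1 := le_trans (SimpleGraph.dist_le p) hplen
          have hdJ : G.dist (ψ u) (ψ y) ≤ J := by
            have t1 : H.dist (φ (ψ u)) (φ (ψ y)) ≤ C + 1 + C := by
              have e1 : H.dist (φ (ψ u)) u ≤ C := hψC u
              have e2 : H.dist y (φ (ψ y)) ≤ C := by
                rw [SimpleGraph.dist_comm]; exact hψC y
              calc H.dist (φ (ψ u)) (φ (ψ y))
                  ≤ H.dist (φ (ψ u)) u + H.dist u (φ (ψ y)) := hH.dist_triangle
                _ ≤ H.dist (φ (ψ u)) u + (H.dist u y + H.dist y (φ (ψ y))) :=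
                    Nat.add_le_add_left hH.dist_triangle _
                _ ≤ C + 1 + C := by omega
            calc G.dist (ψ u) (ψ y) ≤ C * H.dist (φ (ψ u)) (φ (ψ y)) + C^2 := hdown _ _
              _ ≤ C * (C + 1 + C) + C^2 := Nat.add_le_add_right (Nat.mul_le_mul_left _ t1) _
              _ ≤ J := by rw [hJdef]; nlinarith
          obtain ⟨p1, hp1len⟩ := hG.exists_walk_length_eq_dist (ψ u) (ψ y)
          obtain ⟨p2, hp2len⟩ := hG.exists_walk_length_eq_dist (ψ y) z
          have hsup : ∀ x ∈ (p1.append p2).support, ∀ k, 1 ≤ k → k ≤ L*(n+1) → x ∉ W k := by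
            intro x hx k hk1 hk2 hxW
            have hxd : G.dist (ψ y) x ≤ L := by
              rcases (SimpleGraph.Walk.mem_support_append_iff p1 p2).mp hx with hx1 | hx2
              · rw [SimpleGraph.dist_comm]
                calc G.dist x (ψ y) ≤ (p1.dropUntil x hx1).length := SimpleGraph.dist_le _
                  _ ≤ p1.length := SimpleGraph.Walk.length_dropUntil_le p1 hx1
                  _ = G.dist (ψ u) (ψ y) := hp1len
                  _ ≤ L := le_trans hdJ (by rw [hLdef]; omega)
              · calc G.dist (ψ y) x ≤ (p2.takeUntil x hx2).length := SimpleGraph.dist_le _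
                  _ ≤ p2.length := SimpleGraph.Walk.length_takeUntil_le p2 hx2
                  _ = G.dist (ψ y) z := hp2len
                  _ ≤ L := le_trans hz (by rw [hLdef]; omega)
            refine hprot (n+1) y hyprot k hk1 hk2 x hxW ?_
            have e2 : H.dist y (φ (ψ y)) ≤ C := by
              rw [SimpleGraph.dist_comm]; exact hψC y
            calc H.dist y (φ x) ≤ H.dist y (φ (ψ y)) + H.dist (φ (ψ y)) (φ x) :=
                hH.dist_triangle
              _ ≤ C + (C * G.dist (ψ y) x + C) := Nat.add_le_add e2 (hup _ _)
              _ ≤ C + (C * L + C) :=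
                  Nat.add_le_add_left (Nat.add_le_add_right (Nat.mul_le_mul_left _ hxd) _) _
              _ ≤ RH := by rw [hRHdef]; omega
          have hstart : ψ u ∈ fireSet G 1 W X0 (L * n) :=
            ih u hu (ψ u) (by rw [SimpleGraph.dist_self]; exact Nat.zero_le _)
          have hlen : L * n + (p1.append p2).length ≤ L * (n+1) := by
            rw [SimpleGraph.Walk.length_append, hp1len, hp2len, Nat.mul_succ]
            have : G.dist (ψ u) (ψ y) + G.dist (ψ y) z ≤ L := by
              rw [hLdef]; exact Nat.add_le_add hdJ hz
            omega
          have hspread := aux_fireSet_spread G W X0 (L*(n+1)) (p1.append p2) (L*n)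
            hstart hlen hsup
          exact aux_fireSet_mono G 1 W X0 hlen hspread
  -- burned set transfer
  have hburn : ∀ y ∈ burnedSet H 1 W' Y0, ∀ z : V, G.dist (ψ y) z ≤ P →
      z ∈ burnedSet G 1 W X0 := by
    intro y hy z hz
    obtain ⟨s, hs⟩ : ∃ s, y ∈ fireSet H 1 W' Y0 s := by
      simpa [burnedSet, Set.mem_iUnion] using hy
    exact Set.mem_iUnion.mpr ⟨L*s, main s y hs z hz⟩
  have hUmap : ∀ x : V, x ∉ burnedSet G 1 W X0 → φ x ∉ burnedSet H 1 W' Y0 := by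
    intro x hx hc
    refine hx (hburn (φ x) hc x ?_)
    calc G.dist (ψ (φ x)) x ≤ C * H.dist (φ (ψ (φ x))) (φ x) + C^2 := hdown _ _
      _ ≤ C * C + C^2 := Nat.add_le_add_right (Nat.mul_le_mul_left _ (hψC (φ x))) _
      _ ≤ P := by rw [hPdef]; nlinarith
  refine ⟨W', ?_, ?_⟩
  · -- strategy bound
    intro n hn
    have hball : ∀ w : V, ({y | H.dist y (φ w) ≤ RH} : Set V').Finite ∧
        ({y | H.dist y (φ w) ≤ RH} : Set V').ncard ≤ bH RH := by
      intro w
      have e : ({y | H.dist y (φ w) ≤ RH} : Set V') = {y | H.dist (φ w) y ≤ RH} := by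
        ext y; simp [SimpleGraph.dist_comm]
      rw [e]; exact hbH (φ w) RH
    have hW'eq : W' n = ⋃ k ∈ Finset.Icc (L*(n-1)+1) (L*n),
        ⋃ w ∈ W k, {y | H.dist y (φ w) ≤ RH} := by
      ext y
      simp only [hW'def, Set.mem_setOf_eq, Set.mem_iUnion, Finset.mem_Icc, exists_prop]
      constructor
      · rintro ⟨k, h1, h2, w, hw, h3⟩; exact ⟨k, ⟨h1, h2⟩, w, hw, h3⟩
      · rintro ⟨k, ⟨h1, h2⟩, w, hw, h3⟩; exact ⟨k, h1, h2, w, hw, h3⟩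
    have hSk : ∀ k, 1 ≤ k → (⋃ w ∈ W k, {y | H.dist y (φ w) ≤ RH} : Set V').Finite ∧
        (⋃ w ∈ W k, {y | H.dist y (φ w) ≤ RH} : Set V').ncard ≤ K * k^d * bH RH := by
      intro k hk
      obtain ⟨hWkfin, hWkcard⟩ := hWb k hk
      refine ⟨Set.Finite.biUnion hWkfin (fun w _ => (hball w).1), ?_⟩
      have e : (⋃ w ∈ W k, {y | H.dist y (φ w) ≤ RH} : Set V')
          = ⋃ w ∈ hWkfin.toFinset, {y | H.dist y (φ w) ≤ RH} := by
        ext y; simp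
      rw [e]
      refine (aux_ncard_biUnion_le _ _).trans ?_
      refine (Finset.sum_le_card_nsmul _ _ (bH RH) (fun w _ => (hball w).2)).trans ?_
      simp only [smul_eq_mul]
      rw [← Set.ncard_eq_toFinset_card _ hWkfin]
      exact Nat.mul_le_mul_right _ hWkcard
    constructor
    · rw [hW'eq]
      exact Set.Finite.biUnion (Finset.Icc _ _).finite_toSet
        (fun k hk => (hSk k (by
          have := (Finset.mem_Icc.mp hk).1; omega)).1)
    · rw [hW'eq]
      refine (aux_ncard_biUnion_le _ _).trans ?_
      have hbound : ∀ k ∈ Finset.Icc (L*(n-1)+1) (L*n),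
          (⋃ w ∈ W k, {y | H.dist y (φ w) ≤ RH} : Set V').ncard ≤ K * (L*n)^d * bH RH := by
        intro k hk
        obtain ⟨hk1, hk2⟩ := Finset.mem_Icc.mp hk
        refine le_trans (hSk k (by omega)).2 ?_
        exact Nat.mul_le_mul_right _ (Nat.mul_le_mul_left _ (Nat.pow_le_pow_left hk2 d))
      refine (Finset.sum_le_card_nsmul _ _ _ hbound).trans ?_
      simp only [smul_eq_mul]
      have hcard : (Finset.Icc (L*(n-1)+1) (L*n)).card ≤ L := by
        rw [Nat.card_Icc]
        have : L*(n-1) + L = L*n := by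
          obtain ⟨m, rfl⟩ : ∃ m, n = m + 1 := ⟨n - 1, by omega⟩
          rw [Nat.add_sub_cancel, Nat.mul_succ]
        omega
      calc (Finset.Icc (L*(n-1)+1) (L*n)).card * (K * (L*n)^d * bH RH)
          ≤ L * (K * (L*n)^d * bH RH) := Nat.mul_le_mul_right _ hcard
        _ = (K * L^(d+1) * bH RH) * n^d := by rw [mul_pow]; ring
        _ ≤ K' * n^d := Nat.mul_le_mul_right _ (by rw [hK'def]; omega)
  · -- growth equivalence
    obtain ⟨u₀, hu₀, hGE1, hGE2⟩ := hWr
    have hballG : ∀ n : ℕ, ({y | G.dist u₀ y ≤ n} : Set V).Finite := fun n => (hbG u₀ n).1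
    have hballH : ∀ n : ℕ, ({y | H.dist (φ u₀) y ≤ n} : Set V').Finite :=
      fun n => (hbH (φ u₀) n).1
    have hy₀ : φ u₀ ∈ (burnedSet H 1 W' Y0)ᶜ := hUmap u₀ hu₀
    refine ⟨φ u₀, hy₀, ?_, ?_⟩
    · -- full_H ≼ U_H growth
      have stepA : GrowthLE (graphGrowth H Set.univ {φ u₀}) (graphGrowth G Set.univ {u₀}) := by
        refine ⟨bH (2*C) + C + 2*C^2 + 1, by positivity, fun n => ?_⟩
        set E := bH (2*C) + C + 2*C^2 + 1 with hEdef
        rw [aux_graphGrowth_univ, aux_graphGrowth_univ]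
        have hcount : ({v | H.dist (φ u₀) v ≤ n} : Set V').ncard ≤
            bH (2*C) * ({v | G.dist u₀ v ≤ C*n + 2*C^2} : Set V).ncard := by
          refine aux_ncard_le_mul_of_maps ψ _ _ (hballG _) ?_ _ ?_
          · intro y hy
            show G.dist u₀ (ψ y) ≤ C*n + 2*C^2
            have t1 : H.dist (φ u₀) (φ (ψ y)) ≤ n + C :=
              le_trans hH.dist_triangle (Nat.add_le_add hy (by
                rw [SimpleGraph.dist_comm]; exact hψC y))
            calc G.dist u₀ (ψ y) ≤ C * H.dist (φ u₀) (φ (ψ y)) + C^2 := hdown _ _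
              _ ≤ C * (n + C) + C^2 := Nat.add_le_add_right (Nat.mul_le_mul_left _ t1) _
              _ = C*n + 2*C^2 := by ring
          · intro x
            rcases Set.eq_empty_or_nonempty
              ({a | a ∈ {v : V' | H.dist (φ u₀) v ≤ n} ∧ ψ a = x}) with he | ⟨y₁, hy₁⟩
            · rw [he]; simp
            · have hsub : ({a | a ∈ {v : V' | H.dist (φ u₀) v ≤ n} ∧ ψ a = x} : Set V')
                  ⊆ {y | H.dist y₁ y ≤ 2*C} := by
                intro y hy
                show H.dist y₁ y ≤ 2*C
                have e1 : H.dist y₁ (φ (ψ y₁)) ≤ C := by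
                  rw [SimpleGraph.dist_comm]; exact hψC y₁
                have e2 : φ (ψ y₁) = φ (ψ y) := by rw [hy₁.2, hy.2]
                have e3 : H.dist (φ (ψ y₁)) y ≤ C := by rw [e2]; exact hψC y
                calc H.dist y₁ y ≤ H.dist y₁ (φ (ψ y₁)) + H.dist (φ (ψ y₁)) y :=
                    hH.dist_triangle
                  _ ≤ 2*C := by omega
              exact le_trans (Set.ncard_le_ncard hsub (hbH y₁ (2*C)).1) (hbH y₁ (2*C)).2
        refine hcount.trans ?_
        have harg : C*n + 2*C^2 ≤ E*n + E := by
          rw [hEdef]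
          have h1 : C*n ≤ (bH (2*C) + C + 2*C^2 + 1)*n := Nat.mul_le_mul_right _ (by omega)
          omega
        have hmono := aux_graphGrowth_mono G Set.univ u₀ hballG harg
        rw [aux_graphGrowth_univ, aux_graphGrowth_univ] at hmono
        calc bH (2*C) * ({v | G.dist u₀ v ≤ C*n + 2*C^2} : Set V).ncard
            ≤ E * ({v | G.dist u₀ v ≤ E*n + E} : Set V).ncard :=
              Nat.mul_le_mul (by rw [hEdef]; omega) hmono
          _ ≤ E * ({v | G.dist u₀ v ≤ E*n + E} : Set V).ncard + E := Nat.le_add_right _ _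
      have stepC : GrowthLE (graphGrowth G (burnedSet G 1 W X0)ᶜ {u₀})
          (graphGrowth H (burnedSet H 1 W' Y0)ᶜ {φ u₀}) := by
        refine ⟨bG (C^2) + C + 1, by positivity, fun n => ?_⟩
        set E := bG (C^2) + C + 1 with hEdef
        rw [aux_graphGrowth_singleton, aux_graphGrowth_singleton]
        have hcount : ({v | v ∈ (burnedSet G 1 W X0)ᶜ ∧ G.dist u₀ v ≤ n} : Set V).ncard ≤
            bG (C^2) * ({v | v ∈ (burnedSet H 1 W' Y0)ᶜ ∧
              H.dist (φ u₀) v ≤ C*n + C} : Set V').ncard := by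
          refine aux_ncard_le_mul_of_maps φ _ _
            ((hballH (C*n+C)).subset (fun v hv => hv.2)) ?_ _ ?_
          · rintro x ⟨hx1, hx2⟩
            exact ⟨hUmap x hx1, le_trans (hup u₀ x)
              (Nat.add_le_add_right (Nat.mul_le_mul_left _ hx2) _)⟩
          · intro b
            rcases Set.eq_empty_or_nonempty
              ({a | a ∈ {v | v ∈ (burnedSet G 1 W X0)ᶜ ∧ G.dist u₀ v ≤ n} ∧ φ a = b})
              with he | ⟨x₁, hx₁⟩
            · rw [he]; simp
            · have hsub : ({a | a ∈ {v | v ∈ (burnedSet G 1 W X0)ᶜ ∧ G.dist u₀ v ≤ n} ∧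
                  φ a = b} : Set V) ⊆ {z | G.dist x₁ z ≤ C^2} := by
                intro x hx
                show G.dist x₁ x ≤ C^2
                have e2 : φ x₁ = φ x := by rw [hx₁.2, hx.2]
                calc G.dist x₁ x ≤ C * H.dist (φ x₁) (φ x) + C^2 := hdown _ _
                  _ = C * 0 + C^2 := by rw [e2, SimpleGraph.dist_self]
                  _ = C^2 := by ring
              exact le_trans (Set.ncard_le_ncard hsub (hbG x₁ (C^2)).1) (hbG x₁ (C^2)).2
        refine hcount.trans ?_
        have harg : C*n + C ≤ E*n + E := by
          rw [hEdef]
          have h1 : C*n ≤ (bG (C^2) + C + 1)*n := Nat.mul_le_mul_right _ (by omega)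
          omega
        have hmono := aux_graphGrowth_mono H (burnedSet H 1 W' Y0)ᶜ (φ u₀) hballH harg
        rw [aux_graphGrowth_singleton, aux_graphGrowth_singleton] at hmono
        calc bG (C^2) * ({v | v ∈ (burnedSet H 1 W' Y0)ᶜ ∧
              H.dist (φ u₀) v ≤ C*n + C} : Set V').ncard
            ≤ E * ({v | v ∈ (burnedSet H 1 W' Y0)ᶜ ∧
              H.dist (φ u₀) v ≤ E*n + E} : Set V').ncard :=
              Nat.mul_le_mul (by rw [hEdef]; omega) hmono
          _ ≤ _ + E := Nat.le_add_right _ _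
      have hmonoUG := aux_graphGrowth_mono G (burnedSet G 1 W X0)ᶜ u₀ hballG
      have hmonoUH := aux_graphGrowth_mono H (burnedSet H 1 W' Y0)ᶜ (φ u₀) hballH
      exact ((stepA.aux_trans_mono hGE1 hmonoUG).aux_trans_mono stepC hmonoUH)
    · -- U_H growth ≼ full_H : easy
      refine ⟨1, one_pos, fun n => ?_⟩
      rw [aux_graphGrowth_singleton, aux_graphGrowth_univ]
      have h1 : ({v | v ∈ (burnedSet H 1 W' Y0)ᶜ ∧ H.dist (φ u₀) v ≤ n} : Set V').ncard ≤
          ({v | H.dist (φ u₀) v ≤ 1*n+1} : Set V').ncard := by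
        refine Set.ncard_le_ncard ?_ (hballH (1*n+1))
        intro v hv
        have := hv.2
        show H.dist (φ u₀) v ≤ 1*n+1
        omega
      omega
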